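/- Let R be an η-symmetric linear operator on ℝ^5 and λ ∈ ℝ. Then there do not exist vectors X1, X2, X3, X4, X5 forming a basis of ℝ^5 and satisfying the Jordan chain relations R X1 = λ X1, R X2 = λ X2 + X1, R X3 = λ X3 + X2, R X4 = λ X4 + X3, R X5 = λ X5 + X4. (A second order symmetric tensor on a 5-dimensional Lorentzian space cannot have Segre type [5].) -/
import Mathlib


/-- The 5-dimensional Minkowski bilinear form of signature (-,+,+,+,+). -/
def eta (u v : Fin 5 → ℝ) : ℝ :=
  -u 0 * v 0 + u 1 * v 1 + u 2 * v 2 + u 3 * v 3 + u 4 * v 4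

/-- A sum of four real squares vanishes iff each term vanishes. -/
lemma sq4_eq_zero {a b c d : ℝ} (h : a ^ 2 + b ^ 2 + c ^ 2 + d ^ 2 = 0) :
    a = 0 ∧ b = 0 ∧ c = 0 ∧ d = 0 := by
  refine ⟨?_, ?_, ?_, ?_⟩ <;>
    nlinarith [sq_nonneg a, sq_nonneg b, sq_nonneg c, sq_nonneg d]

theorem no_segre_type_5 (R : (Fin 5 → ℝ) →ₗ[ℝ] (Fin 5 → ℝ))
    (hR : ∀ u v : Fin 5 → ℝ, eta (R u) v = eta u (R v)) (lam : ℝ) :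
    ¬ ∃ X1 X2 X3 X4 X5 : Fin 5 → ℝ,
      (LinearIndependent ℝ ![X1, X2, X3, X4, X5] ∧
        Submodule.span ℝ {X1, X2, X3, X4, X5} = ⊤) ∧
      R X1 = lam • X1 ∧
      R X2 = lam • X2 + X1 ∧
      R X3 = lam • X3 + X2 ∧
      R X4 = lam • X4 + X3 ∧
      R X5 = lam • X5 + X4 := by
  rintro ⟨X1, X2, X3, X4, X5, ⟨hli, -⟩, h1, h2, h3, h4, h5⟩
  -- η(X1,X1) = 0
  have e1 : eta X1 X1 = 0 := by
    have h := hR X2 X1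
    rw [h2, h1] at h
    simp only [eta, Pi.add_apply, Pi.smul_apply, smul_eq_mul] at h ⊢
    linear_combination h
  -- η(X1,X2) = 0
  have e2 : eta X1 X2 = 0 := by
    have h := hR X1 X3
    rw [h1, h3] at h
    simp only [eta, Pi.add_apply, Pi.smul_apply, smul_eq_mul] at h ⊢
    linear_combination -h
  -- η(X1,X3) = 0
  have e13 : eta X1 X3 = 0 := by
    have h := hR X1 X4
    rw [h1, h4] at h
    simp only [eta, Pi.add_apply, Pi.smul_apply, smul_eq_mul] at h ⊢
    linear_combination -h
  -- η(X2,X2) = 0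
  have e3 : eta X2 X2 = 0 := by
    have h := hR X2 X3
    rw [h2, h3] at h
    simp only [eta, Pi.add_apply, Pi.smul_apply, smul_eq_mul] at h e13 ⊢
    linear_combination e13 - h
  simp only [eta] at e1 e2 e3
  set t := X1 0 with ht
  set s := X2 0 with hs
  by_cases htz : t = 0
  · -- then X1 = 0, contradicting linear independence
    have key0 : X1 1 ^ 2 + X1 2 ^ 2 + X1 3 ^ 2 + X1 4 ^ 2 = 0 := by
      rw [htz] at e1; linear_combination e1
    obtain ⟨k1, k2, k3, k4⟩ := sq4_eq_zero key0
    have hX1 : X1 = 0 := by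
      have h0 : X1 0 = 0 := by rw [← ht]; exact htz
      funext i
      fin_cases i <;> simp_all
    have := hli.ne_zero 0
    simp [hX1] at this
  · -- s•X1 - t•X2 = 0, contradicting linear independence
    have key : (s*X1 1 - t*X2 1)^2 + (s*X1 2 - t*X2 2)^2 + (s*X1 3 - t*X2 3)^2
        + (s*X1 4 - t*X2 4)^2 = 0 := by
      linear_combination s^2 * e1 - 2*s*t*e2 + t^2*e3
    obtain ⟨k1, k2, k3, k4⟩ := sq4_eq_zero key
    have c0 : s * X1 0 + -t * X2 0 = 0 := by rw [← ht, ← hs]; ring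
    have c1 : s * X1 1 + -t * X2 1 = 0 := by linarith
    have c2 : s * X1 2 + -t * X2 2 = 0 := by linarith
    have c3 : s * X1 3 + -t * X2 3 = 0 := by linarith
    have c4 : s * X1 4 + -t * X2 4 = 0 := by linarith
    have hrel : s • X1 + (-t) • X2 = 0 := by
      funext i
      simp only [Pi.add_apply, Pi.smul_apply, smul_eq_mul, Pi.zero_apply]
      fin_cases i
      · exact c0
      · exact c1
      · exact c2
      · exact c3
      · exact c4
    rw [Fintype.linearIndependent_iff] at hli
    have := hli ![s, -t, 0, 0, 0] (by
      simp [Fin.sum_univ_five]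
      convert hrel using 2 <;> simp) 1
    simp at this
    exact htz (by linarith)
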